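/- Let k ≥ 2 be an integer and let p be a pattern containing exactly k distinct variables, each of which occurs at least 3 times in p. Then for every n ≥ 0, there are at least 2.94^n words of length n over a 3-letter alphabet that avoid p. -/

import Mathlib

/-- A word `w` is an instance of the pattern `p` if there is a non-erasing
substitution (equivalently, a non-erasing monoid morphism on free monoids)
sending `p` to `w`. -/
def IsInstance {Δ α : Type*} (p : List Δ) (w : List α) : Prop :=
  ∃ f : Δ → List α, (∀ v, f v ≠ []) ∧ (p.map f).flatten = w

/-- A word `w` avoids the pattern `p` if no factor of `w` is an instance of `p`. -/
def Avoids {Δ α : Type*} (w : List α) (p : List Δ) : Prop :=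
  ∀ x : List α, x <:+: w → ¬ IsInstance p x

/- ## Auxiliary cardinality lemmas -/

private lemma ncard_biUnion_le' {ι α : Type*} [DecidableEq ι] (s : Finset ι) (t : ι → Set α) :
    (⋃ i ∈ s, t i).ncard ≤ ∑ i ∈ s, (t i).ncard := by
  classical
  induction s using Finset.induction_on with
  | empty => simp
  | insert _ _ h ih =>
    rw [Finset.set_biUnion_insert, Finset.sum_insert h]
    exact le_trans (Set.ncard_union_le _ _) (Nat.add_le_add_left ih _)

private lemma ncard_prod' {α β : Type*} (s : Set α) (t : Set β) :
    (s ×ˢ t).ncard = s.ncard * t.ncard := by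
  rw [← Nat.card_coe_set_eq, ← Nat.card_coe_set_eq, ← Nat.card_coe_set_eq,
    Nat.card_congr (Equiv.Set.prod s t), Nat.card_prod]

private lemma ncard_pi' {ι : Type*} [Fintype ι] {κ : ι → Type*} (t : ∀ i, Set (κ i)) :
    (Set.univ.pi t).ncard = ∏ i, (t i).ncard := by
  rw [← Nat.card_coe_set_eq, Nat.card_congr (Equiv.Set.univPi t), Nat.card_pi]
  exact Finset.prod_congr rfl fun i _ => Nat.card_coe_set_eq _

private lemma ncard_image2_le' {α β γ : Type*} (f : α → β → γ) (s : Set α) (t : Set β)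
    (hs : s.Finite) (ht : t.Finite) : (Set.image2 f s t).ncard ≤ s.ncard * t.ncard := by
  rw [← Set.image_prod, ← ncard_prod']
  exact Set.ncard_image_le (hs.prod ht)

private lemma ncard_length_eq (j : ℕ) : ({w : List (Fin 3) | w.length = j}).ncard = 3 ^ j := by
  have e : ↥{w : List (Fin 3) | w.length = j} ≃ List.Vector (Fin 3) j := Equiv.refl _
  rw [← Nat.card_coe_set_eq, Nat.card_congr e, Nat.card_eq_fintype_card, card_vector,
    Fintype.card_fin]

/- ## Pattern basics -/

section Aux

variable {Δ : Type*} [DecidableEq Δ]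

private lemma avoids_of_infix {α : Type*} {p : List Δ} {w u : List α}
    (hw : Avoids w p) (h : u <:+: w) : Avoids u p := fun x hx => hw x (hx.trans h)

private lemma isInstance_ne_nil {α : Type*} {p : List Δ} (hp : p ≠ []) {x : List α}
    (h : IsInstance p x) : x ≠ [] := by
  obtain ⟨f, hf, hfx⟩ := h
  cases p with
  | nil => exact absurd rfl hp
  | cons v q =>
    intro hcon
    rw [← hfx] at hcon
    simp only [List.map_cons, List.flatten_cons, List.append_eq_nil_iff] at hcon
    exact hf v hcon.1

private lemma avoids_nil {α : Type*} {p : List Δ} (hp : p ≠ []) : Avoids ([] : List α) p := by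
  intro x hx hinst
  exact isInstance_ne_nil hp hinst (List.infix_nil.mp hx)

private lemma infix_concat {α : Type*} {x w : List α} {a : α} (h : x <:+: w ++ [a]) :
    x <:+: w ∨ x <:+ w ++ [a] := by
  obtain ⟨s, t, h⟩ := h
  rcases t.eq_nil_or_concat with rfl | ⟨t', b, rfl⟩
  · right
    exact ⟨s, by simpa using h⟩
  · left
    rw [List.concat_eq_append, ← List.append_assoc] at h
    obtain ⟨h1, -⟩ := List.append_inj' h rfl
    exact ⟨s, t', h1⟩

private lemma bad_decomp {p : List Δ} (hp : p ≠ []) {w : List (Fin 3)} {a : Fin 3}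
    (hw : Avoids w p) (hb : ¬ Avoids (w ++ [a]) p) :
    ∃ u x, u ++ x = w ++ [a] ∧ Avoids u p ∧ IsInstance p x ∧ x ≠ [] := by
  unfold Avoids at hb
  push_neg at hb
  obtain ⟨x, hx, hinst⟩ := hb
  rcases infix_concat hx with h | h
  · exact absurd hinst (hw x h)
  · obtain ⟨u, hu⟩ := h
    have hxne : x ≠ [] := isInstance_ne_nil hp hinst
    have hxpos : 0 < x.length := List.length_pos_iff.mpr hxne
    have hlen : u.length + x.length = w.length + 1 := by
      have := congrArg List.length hu; simpa using this
    have hupw : u <+: w := by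
      refine List.prefix_of_prefix_length_le (⟨x, hu⟩ : u <+: w ++ [a])
        (List.prefix_append w [a]) ?_
      omega
    exact ⟨u, x, hu, avoids_of_infix hw hupw.isInfix, hinst, hxne⟩

/- ## The good/instance sets -/

private def GoodSet (p : List Δ) (n : ℕ) : Set (List (Fin 3)) :=
  {w | w.length = n ∧ Avoids w p}

private def InstSet (p : List Δ) (m : ℕ) : Set (List (Fin 3)) :=
  {x | x.length = m ∧ IsInstance p x}

private lemma finite_good (p : List Δ) (n : ℕ) : (GoodSet p n).Finite :=
  (List.finite_length_eq _ n).subset fun _ hw => hw.1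

private lemma finite_inst (p : List Δ) (m : ℕ) : (InstSet p m).Finite :=
  (List.finite_length_eq _ m).subset fun _ hw => hw.1

/- ## Counting lemma 1 : extension step -/

private lemma step_count {p : List Δ} (hp : p ≠ []) (n : ℕ) :
    3 * (GoodSet p n).ncard ≤ (GoodSet p (n + 1)).ncard +
      ∑ m ∈ Finset.Icc 1 (n + 1),
        (GoodSet p (n + 1 - m)).ncard * (InstSet p m).ncard := by
  classical
  set S : Set (List (Fin 3)) :=
    (fun z : List (Fin 3) × Fin 3 => z.1 ++ [z.2]) '' (GoodSet p n ×ˢ Set.univ) with hS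
  have hinj : Function.Injective (fun z : List (Fin 3) × Fin 3 => z.1 ++ [z.2]) := by
    rintro ⟨w, a⟩ ⟨w', a'⟩ h
    simp only at h
    obtain ⟨h1, h2⟩ := List.append_inj' h rfl
    simp_all
  have hcard : S.ncard = 3 * (GoodSet p n).ncard := by
    rw [hS, Set.ncard_image_of_injective _ hinj, ncard_prod', Set.ncard_univ]
    simp [Nat.card_eq_fintype_card, mul_comm]
  have hsub : S ⊆ GoodSet p (n + 1) ∪
      ⋃ m ∈ Finset.Icc 1 (n + 1),
        Set.image2 (· ++ ·) (GoodSet p (n + 1 - m)) (InstSet p m) := by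
    rintro z ⟨⟨w, a⟩, ⟨hw, -⟩, rfl⟩
    by_cases hz : Avoids (w ++ [a]) p
    · left; exact ⟨by simp [hw.1], hz⟩
    · right
      obtain ⟨u, x, hux, hu, hinst, hxne⟩ := bad_decomp hp hw.2 hz
      have hlen : u.length + x.length = n + 1 := by
        have := congrArg List.length hux
        simp only [List.length_append, List.length_singleton, hw.1] at this
        omega
      have hx1 : 1 ≤ x.length := List.length_pos_iff.mpr hxne
      refine Set.mem_iUnion₂.mpr ⟨x.length, Finset.mem_Icc.mpr ⟨hx1, by omega⟩, ?_⟩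
      exact ⟨u, ⟨by omega, hu⟩, x, ⟨rfl, hinst⟩, hux⟩
  have hfinU : (⋃ m ∈ Finset.Icc 1 (n + 1),
      Set.image2 (· ++ ·) (GoodSet p (n + 1 - m)) (InstSet p m)).Finite :=
    Set.Finite.biUnion (Finset.Icc 1 (n + 1)).finite_toSet
      fun m _ => Set.Finite.image2 _ (finite_good p _) (finite_inst p _)
  calc 3 * (GoodSet p n).ncard = S.ncard := hcard.symm
    _ ≤ (GoodSet p (n + 1) ∪
        ⋃ m ∈ Finset.Icc 1 (n + 1),
          Set.image2 (· ++ ·) (GoodSet p (n + 1 - m)) (InstSet p m)).ncard :=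
        Set.ncard_le_ncard hsub ((finite_good p (n + 1)).union hfinU)
    _ ≤ (GoodSet p (n + 1)).ncard +
        (⋃ m ∈ Finset.Icc 1 (n + 1),
          Set.image2 (· ++ ·) (GoodSet p (n + 1 - m)) (InstSet p m)).ncard :=
        Set.ncard_union_le _ _
    _ ≤ (GoodSet p (n + 1)).ncard +
        ∑ m ∈ Finset.Icc 1 (n + 1),
          (Set.image2 (· ++ ·) (GoodSet p (n + 1 - m)) (InstSet p m)).ncard :=
        Nat.add_le_add_left (ncard_biUnion_le' _ _) _
    _ ≤ (GoodSet p (n + 1)).ncard +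
        ∑ m ∈ Finset.Icc 1 (n + 1),
          (GoodSet p (n + 1 - m)).ncard * (InstSet p m).ncard := by
        refine Nat.add_le_add_left (Finset.sum_le_sum fun m _ => ?_) _
        exact ncard_image2_le' _ _ _ (finite_good p _) (finite_inst p _)

/- ## Counting lemma 2 : instances of a given length -/

private lemma inst_count (p : List Δ) (m M : ℕ) (hmM : m ≤ M) :
    (InstSet p m).ncard ≤
      ∑ l ∈ (Fintype.piFinset fun _ : {v // v ∈ p.toFinset} => Finset.Icc 1 M).filter
          (fun l => ∑ v, p.count v.1 * l v = m),
        3 ^ (∑ v, l v) := by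
  classical
  set L := (Fintype.piFinset fun _ : {v // v ∈ p.toFinset} => Finset.Icc 1 M).filter
      (fun l => ∑ v, p.count v.1 * l v = m) with hL
  set Φ : ({v // v ∈ p.toFinset} → List (Fin 3)) → List (Fin 3) := fun f =>
    (p.map fun v => if h : v ∈ p.toFinset then f ⟨v, h⟩ else []).flatten with hΦ
  have hfinU : (⋃ l ∈ L,
      Set.univ.pi fun v : {v // v ∈ p.toFinset} =>
        {w : List (Fin 3) | w.length = l v}).Finite :=
    Set.Finite.biUnion L.finite_toSet
      fun l _ => Set.Finite.pi fun v => List.finite_length_eq _ _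
  have hsub : InstSet p m ⊆ Φ '' ⋃ l ∈ L,
      Set.univ.pi fun v : {v // v ∈ p.toFinset} =>
        {w : List (Fin 3) | w.length = l v} := by
    rintro x ⟨hxlen, f, hf, hfx⟩
    have hsum : ∑ v : {v // v ∈ p.toFinset}, p.count v.1 * (f v.1).length = x.length := by
      have h1 : x.length = (p.map fun v => (f v).length).sum := by
        rw [← hfx, List.length_flatten, List.map_map]; rfl
      rw [h1, Finset.sum_list_map_count,
        ← Finset.sum_coe_sort p.toFinset (fun v => p.count v • (f v).length)]
      simp [smul_eq_mul]
    set l : {v // v ∈ p.toFinset} → ℕ := fun v => (f v.1).length with hldef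
    have hmem : l ∈ L := by
      rw [hL, Finset.mem_filter]
      constructor
      · refine Fintype.mem_piFinset.mpr fun v => Finset.mem_Icc.mpr ⟨?_, ?_⟩
        · exact List.length_pos_iff.mpr (hf v.1)
        · have hcount : 1 ≤ p.count v.1 :=
            List.count_pos_iff.mpr (List.mem_toFinset.mp v.2)
          have hterm : p.count v.1 * l v ≤ m := by
            rw [← hxlen, ← hsum]
            exact Finset.single_le_sum
              (f := fun v : {v // v ∈ p.toFinset} => p.count v.1 * (f v.1).length)
              (fun _ _ => Nat.zero_le _) (Finset.mem_univ v)
          calc l v ≤ p.count v.1 * l v := Nat.le_mul_of_pos_left _ hcount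
            _ ≤ m := hterm
            _ ≤ M := hmM
      · rw [hsum, hxlen]
    refine ⟨fun v => f v.1, Set.mem_iUnion₂.mpr ⟨l, hmem, fun v _ => rfl⟩, ?_⟩
    rw [hΦ]
    simp only
    rw [← hfx]
    congr 1
    refine List.map_congr_left fun v hv => ?_
    rw [dif_pos (List.mem_toFinset.mpr hv)]
  calc (InstSet p m).ncard
      ≤ (Φ '' ⋃ l ∈ L, Set.univ.pi fun v : {v // v ∈ p.toFinset} =>
          {w : List (Fin 3) | w.length = l v}).ncard :=
        Set.ncard_le_ncard hsub (hfinU.image _)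
    _ ≤ (⋃ l ∈ L, Set.univ.pi fun v : {v // v ∈ p.toFinset} =>
          {w : List (Fin 3) | w.length = l v}).ncard := Set.ncard_image_le hfinU
    _ ≤ ∑ l ∈ L, (Set.univ.pi fun v : {v // v ∈ p.toFinset} =>
          {w : List (Fin 3) | w.length = l v}).ncard := ncard_biUnion_le' _ _
    _ = ∑ l ∈ L, 3 ^ (∑ v, l v) := by
        refine Finset.sum_congr rfl fun l _ => ?_
        rw [ncard_pi']
        rw [show (∏ v : {v // v ∈ p.toFinset},
            ({w : List (Fin 3) | w.length = l v}).ncard) =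
            ∏ v : {v // v ∈ p.toFinset}, 3 ^ (l v) from
          Finset.prod_congr rfl fun v _ => ncard_length_eq (l v)]
        exact Finset.prod_pow_eq_pow_sum _ _ _

/- ## Main induction step -/

private lemma main_step (k : ℕ) (hk : 2 ≤ k) (p : List Δ) (hvars : p.toFinset.card = k)
    (hocc : ∀ v ∈ p, 3 ≤ p.count v) (n : ℕ)
    (IH : ∀ j, j < n →
      (2.94 : ℝ) * ((GoodSet p j).ncard : ℝ) ≤ ((GoodSet p (j + 1)).ncard : ℝ)) :
    (2.94 : ℝ) * ((GoodSet p n).ncard : ℝ) ≤ ((GoodSet p (n + 1)).ncard : ℝ) := by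
  classical
  have hp : p ≠ [] := by
    rintro rfl; simp at hvars; omega
  set g : ℕ → ℝ := fun j => ((GoodSet p j).ncard : ℝ) with hg
  have hgnonneg : ∀ j, (0 : ℝ) ≤ g j := fun j => Nat.cast_nonneg _
  set β : ℝ := 3 / 2.94 ^ 3 with hβ
  have hβ0 : (0 : ℝ) ≤ β := by rw [hβ]; norm_num
  have hβ1 : (0 : ℝ) < 1 - β := by rw [hβ]; norm_num
  -- the chain inequality from the induction hypothesis
  have chain : ∀ i, i ≤ n → (2.94 : ℝ) ^ i * g (n - i) ≤ g n := by
    intro i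
    induction i with
    | zero => intro _; simp
    | succ i ih =>
      intro hin
      have h1 : (2.94 : ℝ) * g (n - (i + 1)) ≤ g (n - (i + 1) + 1) := IH _ (by omega)
      have h2 : n - (i + 1) + 1 = n - i := by omega
      rw [h2] at h1
      calc (2.94 : ℝ) ^ (i + 1) * g (n - (i + 1))
          = 2.94 ^ i * (2.94 * g (n - (i + 1))) := by ring
        _ ≤ 2.94 ^ i * g (n - i) := by
            exact mul_le_mul_of_nonneg_left h1 (by positivity)
        _ ≤ g n := ih (by omega)
  have hg1 : ∀ m ∈ Finset.Icc 1 (n + 1), g (n + 1 - m) ≤ g n / 2.94 ^ (m - 1) := by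
    intro m hm
    obtain ⟨h1, h2⟩ := Finset.mem_Icc.mp hm
    have hc := chain (m - 1) (by omega)
    have heq : n - (m - 1) = n + 1 - m := by omega
    rw [heq] at hc
    rw [le_div_iff₀ (by positivity)]
    calc g (n + 1 - m) * 2.94 ^ (m - 1) = 2.94 ^ (m - 1) * g (n + 1 - m) := mul_comm _ _
      _ ≤ g n := hc
  -- pointwise inequality for single tuples
  have hterm : ∀ s m : ℕ, 1 ≤ m → 3 * s ≤ m →
      (3 : ℝ) ^ s / 2.94 ^ (m - 1) ≤ 2.94 * β ^ s := by
    intro s m h1 h3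
    have hm : m - 1 + 1 = m := by omega
    set t := m - 1 with ht
    have hβs : β ^ s = 3 ^ s / 2.94 ^ (3 * s) := by
      rw [hβ, div_pow, ← pow_mul]
    have hms : (2.94 : ℝ) ^ (3 * s) ≤ 2.94 ^ (t + 1) := by
      apply pow_le_pow_right₀ (by norm_num)
      omega
    rw [div_le_iff₀ (by positivity : (0:ℝ) < 2.94 ^ t), hβs]
    calc (3 : ℝ) ^ s = (3 ^ s / 2.94 ^ (3 * s)) * 2.94 ^ (3 * s) := by
          field_simp
      _ ≤ (3 ^ s / 2.94 ^ (3 * s)) * 2.94 ^ (t + 1) := by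
          refine mul_le_mul_of_nonneg_left hms (by positivity)
      _ = 2.94 * (3 ^ s / 2.94 ^ (3 * s)) * 2.94 ^ t := by ring
  -- the counting step, over ℝ
  have hstepR : (3 : ℝ) * g n ≤ g (n + 1) +
      ∑ m ∈ Finset.Icc 1 (n + 1), g (n + 1 - m) * ((InstSet p m).ncard : ℝ) := by
    have h := step_count hp n
    have h' : ((3 * (GoodSet p n).ncard : ℕ) : ℝ) ≤
        (((GoodSet p (n + 1)).ncard +
          ∑ m ∈ Finset.Icc 1 (n + 1),
            (GoodSet p (n + 1 - m)).ncard * (InstSet p m).ncard : ℕ) : ℝ) :=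
      Nat.cast_le.mpr h
    push_cast at h'
    convert h' using 2
  -- notation for the index sets
  set P := Fintype.piFinset fun _ : {v // v ∈ p.toFinset} => Finset.Icc 1 (n + 1) with hP
  set LL : ℕ → Finset ({v // v ∈ p.toFinset} → ℕ) := fun m =>
    P.filter (fun l => ∑ v, p.count v.1 * l v = m) with hLL
  have hE : ∀ m ∈ Finset.Icc 1 (n + 1),
      ((InstSet p m).ncard : ℝ) ≤ ∑ l ∈ LL m, (3 : ℝ) ^ (∑ v, l v) := by
    intro m hm
    have h := inst_count p m (n + 1) (Finset.mem_Icc.mp hm).2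
    calc ((InstSet p m).ncard : ℝ)
        ≤ ((∑ l ∈ LL m, 3 ^ (∑ v, l v) : ℕ) : ℝ) := Nat.cast_le.mpr h
      _ = ∑ l ∈ LL m, (3 : ℝ) ^ (∑ v, l v) := by push_cast; rfl
  have h3s : ∀ m, ∀ l ∈ LL m, 3 * (∑ v, l v) ≤ m := by
    intro m l hl
    have hlm : ∑ v, p.count v.1 * l v = m := (Finset.mem_filter.mp hl).2
    have h : ∑ v : {v // v ∈ p.toFinset}, 3 * l v ≤
        ∑ v : {v // v ∈ p.toFinset}, p.count v.1 * l v :=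
      Finset.sum_le_sum fun v _ => Nat.mul_le_mul_right _ (hocc v.1 (List.mem_toFinset.mp v.2))
    rw [← Finset.mul_sum] at h
    omega
  -- geometric bound
  have hgeom : ∑ j ∈ Finset.Icc 1 (n + 1), β ^ j ≤ β / (1 - β) := by
    rw [← Finset.Ico_add_one_right_eq_Icc, Finset.sum_Ico_eq_sum_range]
    have h1 : (∑ i ∈ Finset.range (n + 1), β ^ i) * (1 - β) ≤ 1 := by
      have h2 := geom_sum_mul β (n + 1)
      nlinarith [pow_nonneg hβ0 (n + 1)]
    have h3 : ∑ i ∈ Finset.range (n + 1), β ^ i ≤ 1 / (1 - β) := by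
      rw [le_div_iff₀ hβ1]; exact h1
    have h4 : ∑ i ∈ Finset.range (n + 1 + 1 - 1), β ^ (1 + i)
        = β * ∑ i ∈ Finset.range (n + 1), β ^ i := by
      rw [show n + 1 + 1 - 1 = n + 1 from rfl, Finset.mul_sum]
      exact Finset.sum_congr rfl fun i _ => by rw [pow_add, pow_one]
    rw [h4]
    calc β * ∑ i ∈ Finset.range (n + 1), β ^ i ≤ β * (1 / (1 - β)) :=
          mul_le_mul_of_nonneg_left h3 hβ0
      _ = β / (1 - β) := by rw [mul_one_div]
  -- the product/pi bound
  have hPsum : ∑ l ∈ P, β ^ (∑ v, l v) ≤ (β / (1 - β)) ^ 2 := by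
    have e1 : ∑ l ∈ P, β ^ (∑ v, l v) = ∑ l ∈ P, ∏ v, β ^ (l v) :=
      Finset.sum_congr rfl fun l _ => (Finset.prod_pow_eq_pow_sum _ _ _).symm
    rw [e1, hP, ← Finset.prod_univ_sum]
    have hcnonneg : (0:ℝ) ≤ ∑ j ∈ Finset.Icc 1 (n + 1), β ^ j := by positivity
    have hγ0 : (0:ℝ) ≤ β / (1 - β) := by positivity
    have hγ1 : β / (1 - β) ≤ 1 := by rw [hβ]; norm_num
    calc ∏ _v : {v // v ∈ p.toFinset}, (∑ j ∈ Finset.Icc 1 (n + 1), β ^ j)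
        = (∑ j ∈ Finset.Icc 1 (n + 1), β ^ j) ^ k := by
          rw [Finset.prod_const, Finset.card_univ, Fintype.card_coe, hvars]
      _ ≤ (β / (1 - β)) ^ k := pow_le_pow_left₀ hcnonneg hgeom k
      _ ≤ (β / (1 - β)) ^ 2 := pow_le_pow_of_le_one hγ0 hγ1 hk
  -- the sum bound
  have hsumbound : ∑ m ∈ Finset.Icc 1 (n + 1), g (n + 1 - m) * ((InstSet p m).ncard : ℝ)
      ≤ 0.06 * g n := by
    have hdisj : ((Finset.Icc 1 (n + 1) : Finset ℕ) : Set ℕ).PairwiseDisjoint LL := by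
      intro m1 _ m2 _ hne
      refine Finset.disjoint_left.mpr fun l h1 h2 => hne ?_
      rw [← (Finset.mem_filter.mp h1).2, ← (Finset.mem_filter.mp h2).2]
    have hbiU : ∑ m ∈ Finset.Icc 1 (n + 1), ∑ l ∈ LL m, 2.94 * β ^ (∑ v, l v)
        ≤ ∑ l ∈ P, 2.94 * β ^ (∑ v, l v) := by
      rw [← Finset.sum_biUnion hdisj]
      refine Finset.sum_le_sum_of_subset_of_nonneg
        (Finset.biUnion_subset.mpr fun m _ => Finset.filter_subset _ _)
        fun l _ _ => by positivity
    calc ∑ m ∈ Finset.Icc 1 (n + 1), g (n + 1 - m) * ((InstSet p m).ncard : ℝ)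
        ≤ ∑ m ∈ Finset.Icc 1 (n + 1),
            (∑ l ∈ LL m, (3 : ℝ) ^ (∑ v, l v)) * (g n / 2.94 ^ (m - 1)) := by
          refine Finset.sum_le_sum fun m hm => ?_
          rw [mul_comm]
          refine mul_le_mul (hE m hm) (hg1 m hm) (hgnonneg _) (by positivity)
      _ = ∑ m ∈ Finset.Icc 1 (n + 1), ∑ l ∈ LL m,
            (3 : ℝ) ^ (∑ v, l v) * (g n / 2.94 ^ (m - 1)) := by
          exact Finset.sum_congr rfl fun m _ => Finset.sum_mul _ _ _
      _ ≤ ∑ m ∈ Finset.Icc 1 (n + 1), ∑ l ∈ LL m,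
            (2.94 * β ^ (∑ v, l v)) * g n := by
          refine Finset.sum_le_sum fun m hm => Finset.sum_le_sum fun l hl => ?_
          have hkey := hterm (∑ v, l v) m (Finset.mem_Icc.mp hm).1 (h3s m l hl)
          calc (3 : ℝ) ^ (∑ v, l v) * (g n / 2.94 ^ (m - 1))
              = ((3 : ℝ) ^ (∑ v, l v) / 2.94 ^ (m - 1)) * g n := by ring
            _ ≤ (2.94 * β ^ (∑ v, l v)) * g n :=
                mul_le_mul_of_nonneg_right hkey (hgnonneg n)
      _ = (∑ m ∈ Finset.Icc 1 (n + 1), ∑ l ∈ LL m, 2.94 * β ^ (∑ v, l v)) * g n := by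
          rw [Finset.sum_mul]
          exact Finset.sum_congr rfl fun m _ => (Finset.sum_mul _ _ _).symm
      _ ≤ (∑ l ∈ P, 2.94 * β ^ (∑ v, l v)) * g n :=
          mul_le_mul_of_nonneg_right hbiU (hgnonneg n)
      _ = (2.94 * ∑ l ∈ P, β ^ (∑ v, l v)) * g n := by rw [Finset.mul_sum]
      _ ≤ 0.06 * g n := by
          refine mul_le_mul_of_nonneg_right ?_ (hgnonneg n)
          have hnum : (2.94 : ℝ) * (β / (1 - β)) ^ 2 ≤ 0.06 := by rw [hβ]; norm_num
          nlinarith [hPsum]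
  linarith [hstepR, hsumbound]

end Aux

/-- If each of the `k ≥ 2` variables of `p` occurs at least 3 times, then for
every `n` there are at least `2.94 ^ n` words of length `n` over a
3-letter alphabet avoiding `p`. -/
theorem growth_three {Δ : Type*} [DecidableEq Δ] (k : ℕ) (hk : 2 ≤ k)
    (p : List Δ) (hvars : p.toFinset.card = k)
    (hocc : ∀ v ∈ p, 3 ≤ p.count v) (n : ℕ) :
    ((2.94 : ℝ) ^ n) ≤
      ({w : List (Fin 3) | w.length = n ∧ Avoids w p}).ncard := by
  have hp : p ≠ [] := by
    rintro rfl; simp at hvars; omega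
  have hmain : ∀ n, (2.94 : ℝ) * ((GoodSet p n).ncard : ℝ) ≤ ((GoodSet p (n + 1)).ncard : ℝ) := by
    intro n
    induction n using Nat.strong_induction_on with
    | _ n IH => exact main_step k hk p hvars hocc n IH
  have h0 : ((GoodSet p 0).ncard : ℝ) = 1 := by
    have h : GoodSet p 0 = {([] : List (Fin 3))} := by
      ext w
      constructor
      · rintro ⟨h, -⟩
        simpa using List.length_eq_zero_iff.mp h
      · rintro rfl
        exact ⟨rfl, avoids_nil hp⟩
    rw [h, Set.ncard_singleton]; norm_num
  show (2.94 : ℝ) ^ n ≤ ((GoodSet p n).ncard : ℝ)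
  induction n with
  | zero => simp [h0]
  | succ n ih =>
    calc (2.94 : ℝ) ^ (n + 1) = 2.94 * 2.94 ^ n := by ring
      _ ≤ 2.94 * ((GoodSet p n).ncard : ℝ) := mul_le_mul_of_nonneg_left ih (by norm_num)
      _ ≤ _ := hmain n
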